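/- For all integers 1 ≤ k ≤ n, E[ ( X_n − X_k )² ] ≤ E[ (ξ_1^{(0)})² ] · E[ Σ_{x∈ℤ} ( N_{n−1}(x) − N_{k−1}(x) )² ]. -/

import Mathlib

open MeasureTheory ProbabilityTheory Filter

noncomputable section

/-- The simple random walk `Y_n = η_1 + ⋯ + η_n`, with `Y_0 = 0`. -/
def walk {Ω : Type*} (η : ℕ → Ω → ℤ) (n : ℕ) (ω : Ω) : ℤ :=
  ∑ k ∈ Finset.range n, η (k + 1) ω

/-- The local time `N_n(y) = #{0 ≤ k ≤ n : Y_k = y}` of the walk. -/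
def localTime {Ω : Type*} (η : ℕ → Ω → ℤ) (n : ℕ) (y : ℤ) (ω : Ω) : ℕ :=
  ((Finset.range (n + 1)).filter fun k => walk η k ω = y).card

namespace SqAux

lemma localTime_mono {Ω : Type*} (η : ℕ → Ω → ℤ) {m m' : ℕ} (h : m ≤ m') (y : ℤ) (ω : Ω) :
    localTime η m y ω ≤ localTime η m' y ω :=
  Finset.card_le_card (Finset.filter_subset_filter _ (Finset.range_subset_range.2 (by omega)))

lemma localTime_le {Ω : Type*} (η : ℕ → Ω → ℤ) (m : ℕ) (y : ℤ) (ω : Ω) :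
    localTime η m y ω ≤ m + 1 :=
  le_trans (Finset.card_filter_le _ _) (by simp)

lemma abs_walk_le {Ω : Type*} {η : ℕ → Ω → ℤ} {ω : Ω} {m : ℕ}
    (h : ∀ j, 1 ≤ j → j ≤ m → η j ω = 1 ∨ η j ω = -1) :
    ∀ j, j ≤ m → |walk η j ω| ≤ (j : ℤ) := by
  intro j hj
  induction j with
  | zero => simp [walk]
  | succ i ih =>
    have hw : walk η (i + 1) ω = walk η i ω + η (i + 1) ω := by
      simp [walk, Finset.sum_range_succ]
    have h1 := ih (by omega)
    rw [abs_le] at h1 ⊢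
    rcases h (i + 1) (by omega) (by omega) with h2 | h2 <;> rw [hw, h2] <;> push_cast <;> omega

lemma localTime_eq_zero {Ω : Type*} {η : ℕ → Ω → ℤ} {ω : Ω} {m : ℕ}
    (h : ∀ j, 1 ≤ j → j ≤ m → η j ω = 1 ∨ η j ω = -1) {y : ℤ} (hy : (m : ℤ) < |y|) :
    localTime η m y ω = 0 := by
  rw [localTime, Finset.card_eq_zero, Finset.filter_eq_empty_iff]
  intro j hj hw
  rw [Finset.mem_range] at hj
  have h1 := abs_walk_le h j (by omega)
  rw [hw] at h1
  have : (j : ℤ) ≤ (m : ℤ) := by exact_mod_cast Nat.lt_succ_iff.mp hj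
  linarith

lemma sum_Icc_sub_sum_Icc {M : Type*} [AddCommGroup M] (f : ℕ → M) {N1 N2 n : ℕ}
    (h12 : N1 ≤ N2) (h2n : N2 ≤ n) :
    (∑ i ∈ Finset.Icc 1 N2, f i) - (∑ i ∈ Finset.Icc 1 N1, f i)
      = ∑ i ∈ Finset.Icc 1 n, (if N1 < i ∧ i ≤ N2 then f i else 0) := by
  rw [Finset.sum_ite, Finset.sum_const_zero, add_zero]
  have hfilter : (Finset.Icc 1 n).filter (fun i => N1 < i ∧ i ≤ N2) = Finset.Ioc N1 N2 := by
    ext i; simp only [Finset.mem_filter, Finset.mem_Icc, Finset.mem_Ioc]; omega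
  rw [hfilter]
  have hsub : Finset.Icc 1 N2 = Finset.Icc 1 N1 ∪ Finset.Ioc N1 N2 := by
    ext i; simp only [Finset.mem_Icc, Finset.mem_union, Finset.mem_Ioc]; omega
  rw [hsub, Finset.sum_union (by
    rw [Finset.disjoint_left]; intro i hi1 hi2
    simp only [Finset.mem_Icc] at hi1; simp only [Finset.mem_Ioc] at hi2; omega)]
  abel

lemma sum_ite_one {N1 N2 n : ℕ} (h12 : N1 ≤ N2) (h2n : N2 ≤ n) :
    ∑ i ∈ Finset.Icc 1 n, (if N1 < i ∧ i ≤ N2 then (1 : ℝ) else 0) = (N2 : ℝ) - (N1 : ℝ) := by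
  rw [Finset.sum_boole]
  have hfilter : (Finset.Icc 1 n).filter (fun i => N1 < i ∧ i ≤ N2) = Finset.Ioc N1 N2 := by
    ext i; simp only [Finset.mem_filter, Finset.mem_Icc, Finset.mem_Ioc]; omega
  rw [hfilter, Nat.card_Ioc]
  push_cast [Nat.cast_sub h12]
  ring

/-- evaluation family, so that `localTime ev m y : (ℕ → ℤ) → ℕ`. -/
def ev : ℕ → (ℕ → ℤ) → ℤ := fun k g => g k

lemma localTime_comp_ev {Ω : Type*} (η : ℕ → Ω → ℤ) (m : ℕ) (y : ℤ) (ω : Ω) :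
    localTime η m y ω = localTime ev m y (fun k => η k ω) := rfl

lemma measurable_walk_ev (j : ℕ) : Measurable fun g : ℕ → ℤ => walk ev j g := by
  unfold walk ev
  exact Finset.measurable_sum _ (fun l _ => measurable_pi_apply _)

lemma measurable_localTime_ev (m : ℕ) (y : ℤ) :
    Measurable fun g : ℕ → ℤ => localTime ev m y g := by
  have h : ∀ g : ℕ → ℤ, localTime ev m y g
      = ∑ j ∈ Finset.range (m + 1), (if walk ev j g = y then 1 else 0) := by
    intro g; rw [localTime, Finset.card_filter]
  simp only [h]
  refine Finset.measurable_sum _ (fun j _ => ?_)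
  exact Measurable.ite ((measurable_walk_ev j) (measurableSet_singleton y))
    measurable_const measurable_const


def bfun (y : ℤ) : (ℤ → ℤ) → ℝ := fun h => if h y = 1 then 1 else -1

lemma measurable_bfun (y : ℤ) : Measurable (bfun y) :=
  Measurable.ite ((measurable_pi_apply y) (measurableSet_singleton 1)) measurable_const
    measurable_const

def afun (K N : ℕ) (y : ℤ) (i : ℕ) : (ℕ → ℤ) → ℝ := fun g =>
  if localTime ev K y g < i ∧ i ≤ localTime ev N y g then 1 else 0

lemma measurable_afun (K N : ℕ) (y : ℤ) (i : ℕ) : Measurable (afun K N y i) := by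
  unfold afun
  have h1 : MeasurableSet {g : ℕ → ℤ | localTime ev K y g < i} :=
    measurable_localTime_ev K y
      (show MeasurableSet {x : ℕ | x < i} from MeasurableSpace.measurableSet_top)
  have h2 : MeasurableSet {g : ℕ → ℤ | i ≤ localTime ev N y g} :=
    measurable_localTime_ev N y
      (show MeasurableSet {x : ℕ | i ≤ x} from MeasurableSpace.measurableSet_top)
  exact Measurable.ite (h1.inter h2) measurable_const measurable_const

section prob
open scoped ENNReal NNReal

variable {Ω : Type*} [MeasureSpace Ω] [IsProbabilityMeasure (ℙ : Measure Ω)] {p : ℝ}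

lemma geom_nonneg (hp0 : 0 < p) (hp1 : p < 1) (c : ℕ) (k : ℕ) :
    0 ≤ (k : ℝ) ^ c * (p * (1 - p) ^ k) :=
  mul_nonneg (pow_nonneg (Nat.cast_nonneg k) c)
    (mul_nonneg hp0.le (pow_nonneg (by linarith) k))

lemma geom_summable (hp0 : 0 < p) (hp1 : p < 1) (c : ℕ) :
    Summable (fun k : ℕ => (k : ℝ) ^ c * (p * (1 - p) ^ k)) := by
  have hr : ‖(1 - p : ℝ)‖ < 1 := by rw [Real.norm_eq_abs, abs_lt]; constructor <;> linarith
  have h := (summable_pow_mul_geometric_of_norm_lt_one c hr).mul_left p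
  exact h.congr (fun k => by ring)

lemma map_singleton (X : Ω → ℕ) (hX : Measurable X)
    (hlaw : ∀ k, ℙ {ω | X ω = k} = ENNReal.ofReal (p * (1 - p) ^ k)) (k : ℕ) :
    (Measure.map X ℙ) ({k} : Set ℕ) = ENNReal.ofReal (p * (1 - p) ^ k) := by
  rw [Measure.map_apply hX (measurableSet_singleton k)]
  exact hlaw k

lemma lintegral_pow_geom (hp0 : 0 < p) (hp1 : p < 1) (X : Ω → ℕ) (hX : Measurable X)
    (hlaw : ∀ k, ℙ {ω | X ω = k} = ENNReal.ofReal (p * (1 - p) ^ k)) (c : ℕ) :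
    ∫⁻ ω, ((X ω : ℝ≥0∞)) ^ c ∂ℙ
      = ENNReal.ofReal (∑' k : ℕ, (k : ℝ) ^ c * (p * (1 - p) ^ k)) := by
  have hmeas : Measurable fun m : ℕ => ((m : ℝ≥0∞)) ^ c := measurable_from_top
  calc ∫⁻ ω, ((X ω : ℝ≥0∞)) ^ c ∂ℙ
      = ∫⁻ m, ((m : ℝ≥0∞)) ^ c ∂(Measure.map X ℙ) := (lintegral_map hmeas hX).symm
    _ = ∑' k : ℕ, ((k : ℝ≥0∞)) ^ c * (Measure.map X ℙ) {k} := lintegral_countable' _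
    _ = ENNReal.ofReal (∑' k : ℕ, (k : ℝ) ^ c * (p * (1 - p) ^ k)) := by
        rw [ENNReal.ofReal_tsum_of_nonneg (geom_nonneg hp0 hp1 c) (geom_summable hp0 hp1 c)]
        congr 1; funext k
        rw [map_singleton X hX hlaw k, ← ENNReal.ofReal_natCast k,
          ← ENNReal.ofReal_pow (Nat.cast_nonneg k),
          ← ENNReal.ofReal_mul (pow_nonneg (Nat.cast_nonneg k) c)]

lemma integrable_pow_geom (hp0 : 0 < p) (hp1 : p < 1) (X : Ω → ℕ) (hX : Measurable X)
    (hlaw : ∀ k, ℙ {ω | X ω = k} = ENNReal.ofReal (p * (1 - p) ^ k)) (c : ℕ) :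
    Integrable (fun ω => (X ω : ℝ) ^ c) ℙ := by
  constructor
  · exact ((measurable_from_top (f := fun m : ℕ => (m : ℝ))).comp hX).pow_const c
      |>.aestronglyMeasurable
  · show (∫⁻ ω, ‖(X ω : ℝ) ^ c‖ₑ ∂ℙ) < ⊤
    have heq : ∀ ω, (‖(X ω : ℝ) ^ c‖ₑ : ℝ≥0∞) = ((X ω : ℝ≥0∞)) ^ c := by
      intro ω
      rw [Real.enorm_eq_ofReal (by positivity), ENNReal.ofReal_pow (Nat.cast_nonneg _),
        ENNReal.ofReal_natCast]
    simp only [heq]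
    rw [lintegral_pow_geom hp0 hp1 X hX hlaw c]
    exact ENNReal.ofReal_lt_top

lemma integral_pow_geom (hp0 : 0 < p) (hp1 : p < 1) (X : Ω → ℕ) (hX : Measurable X)
    (hlaw : ∀ k, ℙ {ω | X ω = k} = ENNReal.ofReal (p * (1 - p) ^ k)) (c : ℕ) :
    ∫ ω, (X ω : ℝ) ^ c ∂ℙ = ∑' k : ℕ, (p * (1 - p) ^ k) * (k : ℝ) ^ c := by
  have hmeas : Measurable fun m : ℕ => ((m : ℝ)) ^ c := measurable_from_top
  have hint : Integrable (fun m : ℕ => (m : ℝ) ^ c) (Measure.map X ℙ) := by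
    rw [integrable_map_measure hmeas.aestronglyMeasurable hX.aemeasurable]
    exact integrable_pow_geom hp0 hp1 X hX hlaw c
  calc ∫ ω, (X ω : ℝ) ^ c ∂ℙ
      = ∫ m, ((m : ℝ)) ^ c ∂(Measure.map X ℙ) :=
        (integral_map hX.aemeasurable hmeas.aestronglyMeasurable).symm
    _ = ∑' k : ℕ, ((Measure.map X ℙ) {k}).toReal • ((k : ℝ)) ^ c := integral_countable' hint
    _ = ∑' k : ℕ, (p * (1 - p) ^ k) * (k : ℝ) ^ c := by
        congr 1; funext k
        rw [map_singleton X hX hlaw k, ENNReal.toReal_ofReal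
          (mul_nonneg hp0.le (pow_nonneg (by linarith) k)), smul_eq_mul]

lemma memLp_two_geom (hp0 : 0 < p) (hp1 : p < 1) (X : Ω → ℕ) (hX : Measurable X)
    (hlaw : ∀ k, ℙ {ω | X ω = k} = ENNReal.ofReal (p * (1 - p) ^ k)) :
    MemLp (fun ω => (X ω : ℝ)) 2 ℙ := by
  refine (memLp_two_iff_integrable_sq ?_).2 ?_
  · exact ((measurable_from_top (f := fun m : ℕ => (m : ℝ))).comp hX).aestronglyMeasurable
  · exact integrable_pow_geom hp0 hp1 X hX hlaw 2

lemma sq_integral_le_geom (hp0 : 0 < p) (hp1 : p < 1) (X : Ω → ℕ) (hX : Measurable X)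
    (hlaw : ∀ k, ℙ {ω | X ω = k} = ENNReal.ofReal (p * (1 - p) ^ k)) :
    (∫ ω, (X ω : ℝ) ∂ℙ) * (∫ ω, (X ω : ℝ) ∂ℙ) ≤ ∫ ω, (X ω : ℝ) ^ 2 ∂ℙ := by
  have h := variance_nonneg (fun ω => (X ω : ℝ)) ℙ
  rw [variance_eq_sub (memLp_two_geom hp0 hp1 X hX hlaw)] at h
  simp only [Pi.pow_apply] at h
  nlinarith [h]


lemma ae_pm (Z : Ω → ℤ) (hZ : Measurable Z) (h1 : ℙ {ω | Z ω = 1} = 1/2)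
    (h2 : ℙ {ω | Z ω = -1} = 1/2) : ∀ᵐ ω ∂ℙ, Z ω = 1 ∨ Z ω = -1 := by
  have hA : MeasurableSet {ω | Z ω = 1} := hZ (measurableSet_singleton 1)
  have hB : MeasurableSet {ω | Z ω = -1} := hZ (measurableSet_singleton (-1))
  have hdisj : Disjoint {ω | Z ω = 1} {ω | Z ω = -1} := by
    rw [Set.disjoint_left]; rintro ω hω1 hω2
    simp only [Set.mem_setOf_eq] at hω1 hω2; omega
  have hunion : ℙ ({ω | Z ω = 1} ∪ {ω | Z ω = -1}) = 1 := by
    rw [measure_union hdisj hB, h1, h2, ENNReal.add_halves]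
  rw [ae_iff]
  have hset : {ω | ¬(Z ω = 1 ∨ Z ω = -1)} = ({ω | Z ω = 1} ∪ {ω | Z ω = -1})ᶜ := by
    ext ω; simp [not_or]
  rw [hset, prob_compl_eq_zero_iff (hA.union hB)]
  exact hunion

lemma integral_pm (Z : Ω → ℤ) (hZ : Measurable Z) (h1 : ℙ {ω | Z ω = 1} = 1/2) :
    ∫ ω, (if Z ω = 1 then (1 : ℝ) else -1) ∂ℙ = 0 := by
  have hA : MeasurableSet {ω | Z ω = 1} := hZ (measurableSet_singleton 1)
  have heq : (fun ω => (if Z ω = 1 then (1 : ℝ) else -1))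
      = fun ω => Set.indicator {ω | Z ω = 1} (fun _ => (2 : ℝ)) ω - 1 := by
    funext ω; by_cases h : Z ω = 1 <;> simp [h, Set.indicator] <;> norm_num
  rw [heq, integral_sub ((integrable_const (2 : ℝ)).indicator hA) (integrable_const 1),
    integral_indicator_const _ hA, integral_const, measureReal_def, measureReal_def, h1, measure_univ]
  rw [ENNReal.toReal_div, ENNReal.toReal_one, ENNReal.toReal_ofNat]
  norm_num


end prob

end SqAux

/-- The horizontal embedded walk `X_n = Σ_{y∈ℤ} ε_y Σ_{i=1}^{N_{n−1}(y)} ξ_i^{(y)}`,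
with `X_0 = 0`.  Since `|Y_k| ≤ k ≤ n - 1`, the sum over `y ∈ ℤ` reduces to the sum
over `y ∈ [-n, n]`. -/
def hwalk {Ω : Type*} (η : ℕ → Ω → ℤ) (ε : ℤ → Ω → ℤ) (ξ : ℕ → ℤ → Ω → ℕ) :
    ℕ → Ω → ℤ
  | 0, _ => 0
  | n + 1, ω => ∑ y ∈ Finset.Icc (-(n + 1 : ℤ)) (n + 1),
      ε y ω * ∑ i ∈ Finset.Icc 1 (localTime η n y ω), (ξ i y ω : ℤ)

set_option maxHeartbeats 2000000 in
/-- For all `1 ≤ k ≤ n`,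
`E[(X_n − X_k)²] ≤ E[(ξ_1^{(0)})²] · E[Σ_{x∈ℤ} (N_{n−1}(x) − N_{k−1}(x))²]`. -/
theorem sq_hwalk_increment_le
    {Ω : Type*} [MeasureSpace Ω] [IsProbabilityMeasure (ℙ : Measure Ω)]
    (p : ℝ) (hp0 : 0 < p) (hp1 : p < 1)
    (η : ℕ → Ω → ℤ) (ε : ℤ → Ω → ℤ) (ξ : ℕ → ℤ → Ω → ℕ)
    (hη_meas : ∀ k, Measurable (η k))
    (hη_indep : iIndepFun η ℙ)
    (hη_one : ∀ k, ℙ {ω | η k ω = 1} = 1/2)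
    (hη_negone : ∀ k, ℙ {ω | η k ω = -1} = 1/2)
    (hε_meas : ∀ y, Measurable (ε y))
    (hε_indep : iIndepFun ε ℙ)
    (hε_one : ∀ y, ℙ {ω | ε y ω = 1} = 1/2)
    (hε_negone : ∀ y, ℙ {ω | ε y ω = -1} = 1/2)
    (hεη_indep : IndepFun (fun ω (k : ℕ) => η k ω) (fun ω (y : ℤ) => ε y ω) ℙ)
    (hξ_meas : ∀ i y, Measurable (ξ i y))
    (hξ_indep : iIndepFun (fun iy : ℕ × ℤ => ξ iy.1 iy.2) ℙ)
    (hξ_geom : ∀ i y k, ℙ {ω | ξ i y ω = k} = ENNReal.ofReal (p * (1 - p) ^ k))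
    (hξηε_indep : IndepFun (fun ω (iy : ℕ × ℤ) => ξ iy.1 iy.2 ω)
      (fun ω => ((fun k : ℕ => η k ω), (fun y : ℤ => ε y ω))) ℙ) :
    ∀ k n : ℕ, 1 ≤ k → k ≤ n →
      (∫ ω, ((hwalk η ε ξ n ω : ℝ) - (hwalk η ε ξ k ω : ℝ)) ^ 2 ∂ℙ)
        ≤ (∫ ω, (ξ 1 0 ω : ℝ) ^ 2 ∂ℙ) *
          ∫ ω, (∑ x ∈ Finset.Icc (-(n : ℤ)) n,
            ((localTime η (n - 1) x ω : ℝ) - (localTime η (k - 1) x ω : ℝ)) ^ 2) ∂ℙ := by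
  intro k n hk hkn
  obtain ⟨kk, rfl⟩ : ∃ kk, k = kk + 1 := ⟨k - 1, by omega⟩
  obtain ⟨nn, rfl⟩ : ∃ nn, n = nn + 1 := ⟨n - 1, by omega⟩
  have hkn' : kk ≤ nn := by omega
  clear hk hkn
  simp only [Nat.add_sub_cancel, Nat.cast_add, Nat.cast_one]
  have hcastm : Measurable (fun m : ℕ => (m : ℝ)) := measurable_from_top
  -- measurability of building blocks
  have hb_meas : ∀ y : ℤ, Measurable (fun ω => (if ε y ω = 1 then (1:ℝ) else -1)) := fun y =>
    (SqAux.measurable_bfun y).comp (measurable_pi_lambda _ hε_meas)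
  have ha_meas : ∀ (y : ℤ) (i : ℕ), Measurable (fun ω => (if localTime η kk y ω < i ∧ i ≤ localTime η nn y ω then (1:ℝ) else 0)) := fun y i =>
    (SqAux.measurable_afun kk nn y i).comp (measurable_pi_lambda _ hη_meas)
  have hmul_le_one : ∀ u v : ℝ, ‖u‖ ≤ 1 → ‖v‖ ≤ 1 → ‖u * v‖ ≤ 1 := by
    intro u v hu hv; rw [norm_mul]
    nlinarith [norm_nonneg u, norm_nonneg v]
  have hb_abs : ∀ (y : ℤ) (ω : Ω), ‖(if ε y ω = 1 then (1:ℝ) else -1)‖ ≤ 1 := by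
    intro y ω; split_ifs <;> simp
  have ha_abs : ∀ (y : ℤ) (i : ℕ) (ω : Ω), ‖(if localTime η kk y ω < i ∧ i ≤ localTime η nn y ω then (1:ℝ) else 0)‖ ≤ 1 := by
    intro y i ω; split_ifs <;> simp
  have hG_meas : ∀ (y z : ℤ) (i j : ℕ),
      Measurable (fun ω => (if ε y ω = 1 then (1:ℝ) else -1) * (if ε z ω = 1 then (1:ℝ) else -1) * ((if localTime η kk y ω < i ∧ i ≤ localTime η nn y ω then (1:ℝ) else 0) * (if localTime η kk z ω < j ∧ j ≤ localTime η nn z ω then (1:ℝ) else 0))) :=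
    fun y z i j => ((hb_meas y).mul (hb_meas z)).mul ((ha_meas y i).mul (ha_meas z j))
  have hG_abs : ∀ (y z : ℤ) (i j : ℕ) (ω : Ω),
      ‖(if ε y ω = 1 then (1:ℝ) else -1) * (if ε z ω = 1 then (1:ℝ) else -1) * ((if localTime η kk y ω < i ∧ i ≤ localTime η nn y ω then (1:ℝ) else 0) * (if localTime η kk z ω < j ∧ j ≤ localTime η nn z ω then (1:ℝ) else 0))‖ ≤ 1 := fun y z i j ω =>
    hmul_le_one _ _ (hmul_le_one _ _ (hb_abs y ω) (hb_abs z ω))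
      (hmul_le_one _ _ (ha_abs y i ω) (ha_abs z j ω))
  have hG_int : ∀ (y z : ℤ) (i j : ℕ),
      Integrable (fun ω => (if ε y ω = 1 then (1:ℝ) else -1) * (if ε z ω = 1 then (1:ℝ) else -1) * ((if localTime η kk y ω < i ∧ i ≤ localTime η nn y ω then (1:ℝ) else 0) * (if localTime η kk z ω < j ∧ j ≤ localTime η nn z ω then (1:ℝ) else 0))) ℙ :=
    fun y z i j => (integrable_const (1:ℝ)).mono' (hG_meas y z i j).aestronglyMeasurable
      (ae_of_all _ fun ω => hG_abs y z i j ω)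
  have hb_int : ∀ y : ℤ, Integrable (fun ω => (if ε y ω = 1 then (1:ℝ) else -1)) ℙ := fun y =>
    (integrable_const (1:ℝ)).mono' (hb_meas y).aestronglyMeasurable
      (ae_of_all _ fun ω => hb_abs y ω)
  have hbb_int : ∀ y z : ℤ, Integrable (fun ω => (if ε y ω = 1 then (1:ℝ) else -1) * (if ε z ω = 1 then (1:ℝ) else -1)) ℙ := fun y z =>
    (integrable_const (1:ℝ)).mono' ((hb_meas y).mul (hb_meas z)).aestronglyMeasurable
      (ae_of_all _ fun ω => hmul_le_one _ _ (hb_abs y ω) (hb_abs z ω))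
  have haa_int : ∀ (y : ℤ) (i : ℕ) (z : ℤ) (j : ℕ),
      Integrable (fun ω => (if localTime η kk y ω < i ∧ i ≤ localTime η nn y ω then (1:ℝ) else 0) * (if localTime η kk z ω < j ∧ j ≤ localTime η nn z ω then (1:ℝ) else 0)) ℙ := fun y i z j =>
    (integrable_const (1:ℝ)).mono' ((ha_meas y i).mul (ha_meas z j)).aestronglyMeasurable
      (ae_of_all _ fun ω => hmul_le_one _ _ (ha_abs y i ω) (ha_abs z j ω))
  have haa_nonneg : ∀ (y : ℤ) (i : ℕ) (z : ℤ) (j : ℕ),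
      0 ≤ ∫ ω, (if localTime η kk y ω < i ∧ i ≤ localTime η nn y ω then (1:ℝ) else 0) * (if localTime η kk z ω < j ∧ j ≤ localTime η nn z ω then (1:ℝ) else 0) ∂ℙ := fun y i z j =>
    integral_nonneg fun ω => by dsimp only; split_ifs <;> norm_num
  -- ξ integrability and moments
  have hξint : ∀ (i : ℕ) (y : ℤ), Integrable (fun ω => ((ξ i y ω : ℝ))) ℙ := fun i y => by
    simpa using SqAux.integrable_pow_geom hp0 hp1 (ξ i y) (hξ_meas i y) (hξ_geom i y) 1
  have hξsq : ∀ (i : ℕ) (y : ℤ), Integrable (fun ω => ((ξ i y ω : ℝ))^2) ℙ := fun i y =>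
    SqAux.integrable_pow_geom hp0 hp1 (ξ i y) (hξ_meas i y) (hξ_geom i y) 2
  have hF_int : ∀ (i : ℕ) (y : ℤ) (j : ℕ) (z : ℤ),
      Integrable (fun ω => ((ξ i y ω : ℝ)) * ((ξ j z ω : ℝ))) ℙ := by
    intro i y j z
    by_cases hij : (i, y) = (j, z)
    · rw [Prod.mk.injEq] at hij
      obtain ⟨rfl, rfl⟩ := hij
      simpa [pow_two] using hξsq i y
    · exact ((hξ_indep.indepFun hij).comp hcastm hcastm).integrable_mul (hξint i y) (hξint j z)
  have hmean : ∀ (i : ℕ) (y : ℤ), ∫ ω, ((ξ i y ω : ℝ)) ∂ℙ = ∫ ω, ((ξ 1 0 ω : ℝ)) ∂ℙ := by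
    intro i y
    have h1 := SqAux.integral_pow_geom hp0 hp1 (ξ i y) (hξ_meas i y) (hξ_geom i y) 1
    have h2 := SqAux.integral_pow_geom hp0 hp1 (ξ 1 0) (hξ_meas 1 0) (hξ_geom 1 0) 1
    simp only [pow_one] at h1 h2
    rw [h1, h2]
  have hMval : ∀ (i : ℕ) (y : ℤ), ∫ ω, ((ξ i y ω : ℝ))^2 ∂ℙ = (∫ ω, (ξ 1 0 ω : ℝ)^2 ∂ℙ) := by
    intro i y
    rw [SqAux.integral_pow_geom hp0 hp1 (ξ i y) (hξ_meas i y) (hξ_geom i y) 2,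
      SqAux.integral_pow_geom hp0 hp1 (ξ 1 0) (hξ_meas 1 0) (hξ_geom 1 0) 2]
  have hM_nonneg : (0:ℝ) ≤ (∫ ω, (ξ 1 0 ω : ℝ)^2 ∂ℙ) := integral_nonneg fun ω => sq_nonneg _
  have hF_le : ∀ (i : ℕ) (y : ℤ) (j : ℕ) (z : ℤ),
      ∫ ω, ((ξ i y ω : ℝ)) * ((ξ j z ω : ℝ)) ∂ℙ ≤ (∫ ω, (ξ 1 0 ω : ℝ)^2 ∂ℙ) := by
    intro i y j z
    by_cases hij : (i, y) = (j, z)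
    · rw [Prod.mk.injEq] at hij
      obtain ⟨rfl, rfl⟩ := hij
      rw [show (fun ω => ((ξ i y ω : ℝ)) * ((ξ i y ω : ℝ))) = (fun ω => ((ξ i y ω : ℝ))^2) from
        funext fun ω => by ring]
      exact le_of_eq (hMval i y)
    · have hsp : ∫ ω, ((ξ i y ω : ℝ)) * ((ξ j z ω : ℝ)) ∂ℙ
          = (∫ ω, ((ξ i y ω : ℝ)) ∂ℙ) * ∫ ω, ((ξ j z ω : ℝ)) ∂ℙ :=
        ((hξ_indep.indepFun hij).comp hcastm hcastm).integral_mul_eq_mul_integral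
          (hξint i y).aestronglyMeasurable (hξint j z).aestronglyMeasurable
      rw [hsp, hmean i y, hmean j z]
      exact SqAux.sq_integral_le_geom hp0 hp1 (ξ 1 0) (hξ_meas 1 0) (hξ_geom 1 0)
  -- independence splittings
  have hGF : ∀ (y z : ℤ) (i j : ℕ),
      ∫ ω, ((if ε y ω = 1 then (1:ℝ) else -1) * (if ε z ω = 1 then (1:ℝ) else -1) * ((if localTime η kk y ω < i ∧ i ≤ localTime η nn y ω then (1:ℝ) else 0) * (if localTime η kk z ω < j ∧ j ≤ localTime η nn z ω then (1:ℝ) else 0))) * (((ξ i y ω : ℝ)) * ((ξ j z ω : ℝ))) ∂ℙ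
        = (∫ ω, (if ε y ω = 1 then (1:ℝ) else -1) * (if ε z ω = 1 then (1:ℝ) else -1) * ((if localTime η kk y ω < i ∧ i ≤ localTime η nn y ω then (1:ℝ) else 0) * (if localTime η kk z ω < j ∧ j ≤ localTime η nn z ω then (1:ℝ) else 0)) ∂ℙ)
          * ∫ ω, ((ξ i y ω : ℝ)) * ((ξ j z ω : ℝ)) ∂ℙ := by
    intro y z i j
    have hψ : Measurable (fun gh : (ℕ → ℤ) × (ℤ → ℤ) =>
        SqAux.bfun y gh.2 * SqAux.bfun z gh.2
          * (SqAux.afun kk nn y i gh.1 * SqAux.afun kk nn z j gh.1)) :=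
      (((SqAux.measurable_bfun y).comp measurable_snd).mul
        ((SqAux.measurable_bfun z).comp measurable_snd)).mul
        (((SqAux.measurable_afun kk nn y i).comp measurable_fst).mul
          ((SqAux.measurable_afun kk nn z j).comp measurable_fst))
    have hφ : Measurable (fun f : ℕ × ℤ → ℕ => (f (i, y) : ℝ) * (f (j, z) : ℝ)) :=
      (hcastm.comp (measurable_pi_apply (i, y))).mul (hcastm.comp (measurable_pi_apply (j, z)))
    have hind : IndepFun (fun ω => (if ε y ω = 1 then (1:ℝ) else -1) * (if ε z ω = 1 then (1:ℝ) else -1) * ((if localTime η kk y ω < i ∧ i ≤ localTime η nn y ω then (1:ℝ) else 0) * (if localTime η kk z ω < j ∧ j ≤ localTime η nn z ω then (1:ℝ) else 0)))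
        (fun ω => ((ξ i y ω : ℝ)) * ((ξ j z ω : ℝ))) ℙ := hξηε_indep.symm.comp hψ hφ
    exact hind.integral_mul_eq_mul_integral (hG_int y z i j).aestronglyMeasurable (hF_int i y j z).aestronglyMeasurable
  have hGsplit : ∀ (y z : ℤ) (i j : ℕ),
      ∫ ω, (if ε y ω = 1 then (1:ℝ) else -1) * (if ε z ω = 1 then (1:ℝ) else -1) * ((if localTime η kk y ω < i ∧ i ≤ localTime η nn y ω then (1:ℝ) else 0) * (if localTime η kk z ω < j ∧ j ≤ localTime η nn z ω then (1:ℝ) else 0)) ∂ℙ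
        = (∫ ω, (if ε y ω = 1 then (1:ℝ) else -1) * (if ε z ω = 1 then (1:ℝ) else -1) ∂ℙ) * ∫ ω, (if localTime η kk y ω < i ∧ i ≤ localTime η nn y ω then (1:ℝ) else 0) * (if localTime η kk z ω < j ∧ j ≤ localTime η nn z ω then (1:ℝ) else 0) ∂ℙ := by
    intro y z i j
    have hψb : Measurable (fun h : ℤ → ℤ => SqAux.bfun y h * SqAux.bfun z h) :=
      (SqAux.measurable_bfun y).mul (SqAux.measurable_bfun z)
    have hψa : Measurable (fun g : ℕ → ℤ => SqAux.afun kk nn y i g * SqAux.afun kk nn z j g) :=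
      (SqAux.measurable_afun kk nn y i).mul (SqAux.measurable_afun kk nn z j)
    have hind : IndepFun (fun ω => (if ε y ω = 1 then (1:ℝ) else -1) * (if ε z ω = 1 then (1:ℝ) else -1))
        (fun ω => (if localTime η kk y ω < i ∧ i ≤ localTime η nn y ω then (1:ℝ) else 0) * (if localTime η kk z ω < j ∧ j ≤ localTime η nn z ω then (1:ℝ) else 0)) ℙ := hεη_indep.symm.comp hψb hψa
    exact hind.integral_mul_eq_mul_integral (hbb_int y z).aestronglyMeasurable (haa_int y i z j).aestronglyMeasurable
  have hχ : Measurable (fun t : ℤ => if t = 1 then (1:ℝ) else -1) :=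
    Measurable.ite (measurableSet_singleton 1) measurable_const measurable_const
  have hb_val : ∀ y : ℤ, ∫ ω, (if ε y ω = 1 then (1:ℝ) else -1) ∂ℙ = 0 := fun y =>
    SqAux.integral_pm (ε y) (hε_meas y) (hε_one y)
  have hbb_val : ∀ y z : ℤ, y ≠ z → ∫ ω, (if ε y ω = 1 then (1:ℝ) else -1) * (if ε z ω = 1 then (1:ℝ) else -1) ∂ℙ = 0 := by
    intro y z hyz
    have hind : IndepFun (fun ω => (if ε y ω = 1 then (1:ℝ) else -1)) (fun ω => (if ε z ω = 1 then (1:ℝ) else -1)) ℙ :=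
      (hε_indep.indepFun hyz).comp hχ hχ
    have hsp : ∫ ω, (if ε y ω = 1 then (1:ℝ) else -1) * (if ε z ω = 1 then (1:ℝ) else -1) ∂ℙ
        = (∫ ω, (if ε y ω = 1 then (1:ℝ) else -1) ∂ℙ)
          * ∫ ω, (if ε z ω = 1 then (1:ℝ) else -1) ∂ℙ :=
      hind.integral_mul_eq_mul_integral (hb_int y).aestronglyMeasurable (hb_int z).aestronglyMeasurable
    rw [hsp, hb_val y, hb_val z, mul_zero]
  have hbb_diag : ∀ y : ℤ, ∫ ω, (if ε y ω = 1 then (1:ℝ) else -1) * (if ε y ω = 1 then (1:ℝ) else -1) ∂ℙ = 1 := by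
    intro y
    rw [show (fun ω => (if ε y ω = 1 then (1:ℝ) else -1) * (if ε y ω = 1 then (1:ℝ) else -1)) = (fun _ => (1:ℝ)) from
      funext fun ω => by split_ifs <;> norm_num]
    simp
  -- the a.e. identity
  have hgoodη : ∀ᵐ ω ∂ℙ, ∀ j : ℕ, 1 ≤ j → j ≤ nn + 1 → η j ω = 1 ∨ η j ω = -1 := by
    rw [MeasureTheory.ae_all_iff]
    intro j
    filter_upwards [SqAux.ae_pm (η j) (hη_meas j) (hη_one j) (hη_negone j)] with ω h _ _
    exact h
  have hgoodε : ∀ᵐ ω ∂ℙ, ∀ y : ℤ, ε y ω = 1 ∨ ε y ω = -1 :=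
    MeasureTheory.ae_all_iff.2 fun y => SqAux.ae_pm (ε y) (hε_meas y) (hε_one y) (hε_negone y)
  have hae : ∀ᵐ ω ∂ℙ, (hwalk η ε ξ (nn + 1) ω : ℝ) - (hwalk η ε ξ (kk + 1) ω : ℝ)
      = ∑ y ∈ Finset.Icc (-((nn:ℤ) + 1)) ((nn:ℤ) + 1), (if ε y ω = 1 then (1:ℝ) else -1) * ∑ i ∈ Finset.Icc 1 (nn + 1), (if localTime η kk y ω < i ∧ i ≤ localTime η nn y ω then (1:ℝ) else 0) * ((ξ i y ω : ℝ)) := by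
    filter_upwards [hgoodη, hgoodε] with ω h1 h2
    have hwk : hwalk η ε ξ (kk + 1) ω
        = ∑ y ∈ Finset.Icc (-((nn:ℤ) + 1)) ((nn:ℤ) + 1), ε y ω * ∑ i ∈ Finset.Icc 1 (localTime η kk y ω), (ξ i y ω : ℤ) := by
      show (∑ y ∈ Finset.Icc (-((kk:ℤ) + 1)) ((kk:ℤ) + 1),
        ε y ω * ∑ i ∈ Finset.Icc 1 (localTime η kk y ω), (ξ i y ω : ℤ)) = _
      refine Finset.sum_subset (Finset.Icc_subset_Icc (by push_cast; omega)
        (by push_cast; omega)) ?_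
      intro y hy hy2
      have hy' : (kk : ℤ) < |y| := by
        simp only [Finset.mem_Icc, not_and_or, not_le] at hy2
        rcases abs_cases y with ⟨h, h'⟩ | ⟨h, h'⟩ <;> rw [h] <;> omega
      rw [SqAux.localTime_eq_zero (fun j hj1 hj2 => h1 j hj1 (by omega)) hy']
      simp
    have hwn : hwalk η ε ξ (nn + 1) ω
        = ∑ y ∈ Finset.Icc (-((nn:ℤ) + 1)) ((nn:ℤ) + 1), ε y ω * ∑ i ∈ Finset.Icc 1 (localTime η nn y ω), (ξ i y ω : ℤ) := rfl
    have hZ : hwalk η ε ξ (nn + 1) ω - hwalk η ε ξ (kk + 1) ω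
        = ∑ y ∈ Finset.Icc (-((nn:ℤ) + 1)) ((nn:ℤ) + 1), ε y ω * ∑ i ∈ Finset.Icc 1 (nn + 1),
            (if localTime η kk y ω < i ∧ i ≤ localTime η nn y ω then (ξ i y ω : ℤ) else 0) := by
      rw [hwn, hwk, ← Finset.sum_sub_distrib]
      refine Finset.sum_congr rfl fun y _ => ?_
      rw [← mul_sub, SqAux.sum_Icc_sub_sum_Icc _ (SqAux.localTime_mono η hkn' y ω)
        (SqAux.localTime_le η nn y ω)]
    have hcast : (hwalk η ε ξ (nn + 1) ω : ℝ) - (hwalk η ε ξ (kk + 1) ω : ℝ)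
        = ((hwalk η ε ξ (nn + 1) ω - hwalk η ε ξ (kk + 1) ω : ℤ) : ℝ) := by push_cast; ring
    rw [hcast, hZ]
    push_cast
    refine Finset.sum_congr rfl fun y _ => ?_
    have hbe : (ε y ω : ℝ) = (if ε y ω = 1 then (1:ℝ) else -1) := by
      rcases h2 y with h | h <;> rw [h] <;> norm_num
    rw [← hbe]
    congr 1
    refine Finset.sum_congr rfl fun i _ => ?_
    by_cases hc : localTime η kk y ω < i ∧ i ≤ localTime η nn y ω <;> simp [hc]
  -- integrability of inner sums for Fubini-type swaps
  have hT_int : ∀ (y z : ℤ) (i j : ℕ), Integrable (fun ω => ((if ε y ω = 1 then (1:ℝ) else -1) * (if ε z ω = 1 then (1:ℝ) else -1) * ((if localTime η kk y ω < i ∧ i ≤ localTime η nn y ω then (1:ℝ) else 0) * (if localTime η kk z ω < j ∧ j ≤ localTime η nn z ω then (1:ℝ) else 0))) * (((ξ i y ω : ℝ)) * ((ξ j z ω : ℝ)))) ℙ :=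
    fun y z i j => (hF_int i y j z).bdd_mul (hG_meas y z i j).aestronglyMeasurable
      (ae_of_all _ fun ω => hG_abs y z i j ω)
  -- expansion of the square
  have hexp : ∀ ω, (∑ y ∈ Finset.Icc (-((nn:ℤ) + 1)) ((nn:ℤ) + 1), (if ε y ω = 1 then (1:ℝ) else -1) * ∑ i ∈ Finset.Icc 1 (nn + 1), (if localTime η kk y ω < i ∧ i ≤ localTime η nn y ω then (1:ℝ) else 0) * ((ξ i y ω : ℝ)))^2
      = ∑ y ∈ Finset.Icc (-((nn:ℤ) + 1)) ((nn:ℤ) + 1), ∑ z ∈ Finset.Icc (-((nn:ℤ) + 1)) ((nn:ℤ) + 1), ∑ i ∈ Finset.Icc 1 (nn + 1), ∑ j ∈ Finset.Icc 1 (nn + 1), ((if ε y ω = 1 then (1:ℝ) else -1) * (if ε z ω = 1 then (1:ℝ) else -1) * ((if localTime η kk y ω < i ∧ i ≤ localTime η nn y ω then (1:ℝ) else 0) * (if localTime η kk z ω < j ∧ j ≤ localTime η nn z ω then (1:ℝ) else 0))) * (((ξ i y ω : ℝ)) * ((ξ j z ω : ℝ))) := by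
    intro ω
    rw [sq, Finset.sum_mul_sum]
    refine Finset.sum_congr rfl fun y _ => Finset.sum_congr rfl fun z _ => ?_
    rw [Finset.mul_sum, Finset.mul_sum, Finset.sum_mul_sum]
    refine Finset.sum_congr rfl fun i _ => Finset.sum_congr rfl fun j _ => ?_
    ring
  have hLHS : ∫ ω, ((hwalk η ε ξ (nn + 1) ω : ℝ) - (hwalk η ε ξ (kk + 1) ω : ℝ))^2 ∂ℙ
      = ∑ y ∈ Finset.Icc (-((nn:ℤ) + 1)) ((nn:ℤ) + 1), ∑ z ∈ Finset.Icc (-((nn:ℤ) + 1)) ((nn:ℤ) + 1), ∑ i ∈ Finset.Icc 1 (nn + 1), ∑ j ∈ Finset.Icc 1 (nn + 1),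
          ∫ ω, ((if ε y ω = 1 then (1:ℝ) else -1) * (if ε z ω = 1 then (1:ℝ) else -1) * ((if localTime η kk y ω < i ∧ i ≤ localTime η nn y ω then (1:ℝ) else 0) * (if localTime η kk z ω < j ∧ j ≤ localTime η nn z ω then (1:ℝ) else 0))) * (((ξ i y ω : ℝ)) * ((ξ j z ω : ℝ))) ∂ℙ := by
    have h1 : ∫ ω, ((hwalk η ε ξ (nn + 1) ω : ℝ) - (hwalk η ε ξ (kk + 1) ω : ℝ))^2 ∂ℙ
        = ∫ ω, (∑ y ∈ Finset.Icc (-((nn:ℤ) + 1)) ((nn:ℤ) + 1), ∑ z ∈ Finset.Icc (-((nn:ℤ) + 1)) ((nn:ℤ) + 1), ∑ i ∈ Finset.Icc 1 (nn + 1), ∑ j ∈ Finset.Icc 1 (nn + 1), ((if ε y ω = 1 then (1:ℝ) else -1) * (if ε z ω = 1 then (1:ℝ) else -1) * ((if localTime η kk y ω < i ∧ i ≤ localTime η nn y ω then (1:ℝ) else 0) * (if localTime η kk z ω < j ∧ j ≤ localTime η nn z ω then (1:ℝ) else 0))) * (((ξ i y ω : ℝ)) * ((ξ j z ω : ℝ))))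 ∂ℙ := by
      refine integral_congr_ae (hae.mono fun ω h => ?_)
      dsimp only
      rw [h]
      exact hexp ω
    rw [h1, integral_finset_sum _ (fun y _ => integrable_finset_sum _ (fun z _ =>
      integrable_finset_sum _ (fun i _ => integrable_finset_sum _ (fun j _ => hT_int y z i j))))]
    refine Finset.sum_congr rfl fun y _ => ?_
    rw [integral_finset_sum _ (fun z _ =>
      integrable_finset_sum _ (fun i _ => integrable_finset_sum _ (fun j _ => hT_int y z i j)))]
    refine Finset.sum_congr rfl fun z _ => ?_
    rw [integral_finset_sum _ (fun i _ => integrable_finset_sum _ (fun j _ => hT_int y z i j))]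
    refine Finset.sum_congr rfl fun i _ => ?_
    rw [integral_finset_sum _ (fun j _ => hT_int y z i j)]
  -- counting identity for the right-hand side
  have hcount : ∀ (ω : Ω) (x : ℤ), (localTime η nn x ω : ℝ) - (localTime η kk x ω : ℝ)
      = ∑ i ∈ Finset.Icc 1 (nn + 1), (if localTime η kk x ω < i ∧ i ≤ localTime η nn x ω then (1:ℝ) else 0) := by
    intro ω x
    rw [← SqAux.sum_ite_one (SqAux.localTime_mono η hkn' x ω) (SqAux.localTime_le η nn x ω)]
  have hptw : ∀ (ω : Ω) (x : ℤ), ((localTime η nn x ω : ℝ) - (localTime η kk x ω : ℝ))^2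
      = ∑ i ∈ Finset.Icc 1 (nn + 1), ∑ j ∈ Finset.Icc 1 (nn + 1), (if localTime η kk x ω < i ∧ i ≤ localTime η nn x ω then (1:ℝ) else 0) * (if localTime η kk x ω < j ∧ j ≤ localTime η nn x ω then (1:ℝ) else 0) := by
    intro ω x
    rw [hcount ω x, sq, Finset.sum_mul_sum]
  have hRHS : ∫ ω, (∑ x ∈ Finset.Icc (-((nn:ℤ) + 1)) ((nn:ℤ) + 1), ((localTime η nn x ω : ℝ) - (localTime η kk x ω : ℝ))^2) ∂ℙ
      = ∑ x ∈ Finset.Icc (-((nn:ℤ) + 1)) ((nn:ℤ) + 1), ∑ i ∈ Finset.Icc 1 (nn + 1), ∑ j ∈ Finset.Icc 1 (nn + 1), ∫ ω, (if localTime η kk x ω < i ∧ i ≤ localTime η nn x ω then (1:ℝ) else 0) * (if localTime η kk x ω < j ∧ j ≤ localTime η nn x ω then (1:ℝ) else 0) ∂ℙ := by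
    have h1 : (fun ω => ∑ x ∈ Finset.Icc (-((nn:ℤ) + 1)) ((nn:ℤ) + 1), ((localTime η nn x ω : ℝ) - (localTime η kk x ω : ℝ))^2)
        = fun ω => ∑ x ∈ Finset.Icc (-((nn:ℤ) + 1)) ((nn:ℤ) + 1), ∑ i ∈ Finset.Icc 1 (nn + 1), ∑ j ∈ Finset.Icc 1 (nn + 1), (if localTime η kk x ω < i ∧ i ≤ localTime η nn x ω then (1:ℝ) else 0) * (if localTime η kk x ω < j ∧ j ≤ localTime η nn x ω then (1:ℝ) else 0) :=
      funext fun ω => Finset.sum_congr rfl fun x _ => hptw ω x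
    rw [h1, integral_finset_sum _ (fun x _ => integrable_finset_sum _ (fun i _ =>
      integrable_finset_sum _ (fun j _ => haa_int x i x j)))]
    refine Finset.sum_congr rfl fun x _ => ?_
    rw [integral_finset_sum _ (fun i _ => integrable_finset_sum _ (fun j _ => haa_int x i x j))]
    refine Finset.sum_congr rfl fun i _ => ?_
    rw [integral_finset_sum _ (fun j _ => haa_int x i x j)]
  -- put everything together
  calc ∫ ω, ((hwalk η ε ξ (nn + 1) ω : ℝ) - (hwalk η ε ξ (kk + 1) ω : ℝ))^2 ∂ℙ
      = ∑ y ∈ Finset.Icc (-((nn:ℤ) + 1)) ((nn:ℤ) + 1), ∑ z ∈ Finset.Icc (-((nn:ℤ) + 1)) ((nn:ℤ) + 1), ∑ i ∈ Finset.Icc 1 (nn + 1), ∑ j ∈ Finset.Icc 1 (nn + 1), ∫ ω, ((if ε y ω = 1 then (1:ℝ) else -1) * (if ε z ω = 1 then (1:ℝ) else -1) * ((if localTime η kk y ω < i ∧ i ≤ localTime η nn y ω then (1:ℝ) else 0) * (if localTime η kk z ω < j ∧ j ≤ localTime η nn z ω then (1:ℝ) else 0))) * (((ξ i y ω : ℝ))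 * ((ξ j z ω : ℝ))) ∂ℙ := hLHS
    _ = ∑ y ∈ Finset.Icc (-((nn:ℤ) + 1)) ((nn:ℤ) + 1), ∑ i ∈ Finset.Icc 1 (nn + 1), ∑ j ∈ Finset.Icc 1 (nn + 1), ∫ ω, ((if ε y ω = 1 then (1:ℝ) else -1) * (if ε y ω = 1 then (1:ℝ) else -1) * ((if localTime η kk y ω < i ∧ i ≤ localTime η nn y ω then (1:ℝ) else 0) * (if localTime η kk y ω < j ∧ j ≤ localTime η nn y ω then (1:ℝ) else 0))) * (((ξ i y ω : ℝ)) * ((ξ j y ω : ℝ))) ∂ℙ := by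
        refine Finset.sum_congr rfl fun y hy => ?_
        rw [Finset.sum_eq_single_of_mem y hy]
        intro z _ hzy
        refine Finset.sum_eq_zero fun i _ => Finset.sum_eq_zero fun j _ => ?_
        rw [hGF y z i j, hGsplit y z i j, hbb_val y z (Ne.symm hzy), zero_mul, zero_mul]
    _ ≤ ∑ y ∈ Finset.Icc (-((nn:ℤ) + 1)) ((nn:ℤ) + 1), ∑ i ∈ Finset.Icc 1 (nn + 1), ∑ j ∈ Finset.Icc 1 (nn + 1), (∫ ω, (ξ 1 0 ω : ℝ)^2 ∂ℙ) * ∫ ω, (if localTime η kk y ω < i ∧ i ≤ localTime η nn y ω then (1:ℝ) else 0) * (if localTime η kk y ω < j ∧ j ≤ localTime η nn y ω then (1:ℝ) else 0) ∂ℙ := by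
        refine Finset.sum_le_sum fun y _ => Finset.sum_le_sum fun i _ =>
          Finset.sum_le_sum fun j _ => ?_
        rw [hGF y y i j, hGsplit y y i j, hbb_diag y, one_mul]
        calc (∫ ω, (if localTime η kk y ω < i ∧ i ≤ localTime η nn y ω then (1:ℝ) else 0) * (if localTime η kk y ω < j ∧ j ≤ localTime η nn y ω then (1:ℝ) else 0) ∂ℙ) * ∫ ω, ((ξ i y ω : ℝ)) * ((ξ j y ω : ℝ)) ∂ℙ
            ≤ (∫ ω, (if localTime η kk y ω < i ∧ i ≤ localTime η nn y ω then (1:ℝ) else 0) * (if localTime η kk y ω < j ∧ j ≤ localTime η nn y ω then (1:ℝ) else 0) ∂ℙ) * (∫ ω, (ξ 1 0 ω : ℝ)^2 ∂ℙ) :=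
              mul_le_mul_of_nonneg_left (hF_le i y j y) (haa_nonneg y i y j)
          _ = (∫ ω, (ξ 1 0 ω : ℝ)^2 ∂ℙ) * ∫ ω, (if localTime η kk y ω < i ∧ i ≤ localTime η nn y ω then (1:ℝ) else 0) * (if localTime η kk y ω < j ∧ j ≤ localTime η nn y ω then (1:ℝ) else 0) ∂ℙ := mul_comm _ _
    _ = (∫ ω, (ξ 1 0 ω : ℝ)^2 ∂ℙ) * ∑ x ∈ Finset.Icc (-((nn:ℤ) + 1)) ((nn:ℤ) + 1), ∑ i ∈ Finset.Icc 1 (nn + 1), ∑ j ∈ Finset.Icc 1 (nn + 1), ∫ ω, (if localTime η kk x ω < i ∧ i ≤ localTime η nn x ω then (1:ℝ) else 0) * (if localTime η kk x ω < j ∧ j ≤ localTime η nn x ω then (1:ℝ) else 0) ∂ℙ := by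
        rw [Finset.mul_sum]
        refine Finset.sum_congr rfl fun y _ => ?_
        rw [Finset.mul_sum]
        refine Finset.sum_congr rfl fun i _ => ?_
        rw [Finset.mul_sum]
    _ = (∫ ω, (ξ 1 0 ω : ℝ)^2 ∂ℙ) * ∫ ω, (∑ x ∈ Finset.Icc (-((nn:ℤ) + 1)) ((nn:ℤ) + 1),
          ((localTime η nn x ω : ℝ) - (localTime η kk x ω : ℝ))^2) ∂ℙ := by rw [hRHS]
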